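/- arXiv:1510.01042 — 2 statements merged into one kernel-verified Lean document; each statement's English description precedes it below -/
import Mathlib

section
/- Fix T > 0 and a filtered probability space (Ω, F, (F_t)_{t∈[0,T]}, P). Let τ ≤ T be a stopping time and let R : [0,T] × Ω → [0,∞) be a progressively measurable process such that ∫₀^τ R(s) ds < κ almost surely, for a fixed constant κ > 0. Then for every δ > 0 there exist a natural number N and stopping times 0 = τ₀ ≤ τ₁ ≤ … ≤ τ_N ≤ τ_{N+1} = τ such that for each k = 1, …, N+1, ∫_{τ_{k−1}}^{τ_k} R(s) ds < δ almost surely. -/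
open MeasureTheory
open scoped ENNReal

/-- Given a stopping time `τ ≤ T` and a nonnegative progressively measurable process `R`
with `∫₀^τ R < κ` a.s., for every `δ > 0` there are finitely many stopping times
`0 = τ₀ ≤ τ₁ ≤ … ≤ τ_N ≤ τ_{N+1} = τ` with `∫_{τ_{k-1}}^{τ_k} R < δ` a.s. for each
`k = 1, …, N+1`. -/
theorem exists_stopping_time_partition
    {Ω : Type*} [mΩ : MeasurableSpace Ω] (μ : Measure Ω) [IsProbabilityMeasure μ]
    (ℱ : Filtration ℝ mΩ) (T κ : ℝ) (hT : 0 < T) (hκ : 0 < κ)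
    (R : ℝ → Ω → ℝ) (hRnonneg : ∀ t ω, 0 ≤ R t ω) (hRprog : ProgMeasurable ℱ R)
    (τ : Ω → ℝ) (hτ : IsStoppingTime ℱ (fun ω => (τ ω : WithTop ℝ))) (hτ0 : ∀ ω, 0 ≤ τ ω) (hτT : ∀ ω, τ ω ≤ T)
    (hR : ∀ᵐ ω ∂μ, ∫ s in Set.Ioc 0 (τ ω), R s ω < κ) :
    ∀ δ > (0 : ℝ), ∃ (N : ℕ) (σ : ℕ → Ω → ℝ),
      (∀ k, IsStoppingTime ℱ (fun ω => (σ k ω : WithTop ℝ))) ∧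
      (∀ ω, σ 0 ω = 0) ∧
      (∀ ω, σ (N + 1) ω = τ ω) ∧
      (∀ k ≤ N, ∀ ω, σ k ω ≤ σ (k + 1) ω) ∧
      (∀ k, 1 ≤ k → k ≤ N + 1 →
        ∀ᵐ ω ∂μ, ∫ s in Set.Ioc (σ (k - 1) ω) (σ k ω), R s ω < δ) := by
  intro δ hδ
  classical
  -- constants
  set c : ℝ≥0∞ := ENNReal.ofReal (δ / 2) with hc_def
  have hδ2 : (0:ℝ) < δ / 2 := by linarith
  have hc_pos : 0 < c := ENNReal.ofReal_pos.mpr hδ2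
  have hc_ne_top : c ≠ ⊤ := ENNReal.ofReal_ne_top
  set N : ℕ := ⌈κ / (δ / 2)⌉₊ with hN_def
  have hN1 : 1 ≤ N := Nat.one_le_iff_ne_zero.mpr (by
    simp only [hN_def, ne_eq, Nat.ceil_eq_zero, not_le]
    positivity)
  have hκN : ENNReal.ofReal κ ≤ (N : ℝ≥0∞) * c := by
    have h1 : κ ≤ (N : ℝ) * (δ / 2) := by
      have h2 := Nat.le_ceil (κ / (δ / 2))
      rw [← div_le_iff₀ hδ2]
      exact h2
    calc ENNReal.ofReal κ ≤ ENNReal.ofReal ((N : ℝ) * (δ / 2)) := ENNReal.ofReal_le_ofReal h1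
    _ = (N : ℝ≥0∞) * c := by
        rw [ENNReal.ofReal_mul (by positivity), ENNReal.ofReal_natCast]
  have hkc_ne_top : ∀ k : ℕ, ((k : ℝ≥0∞) * c) ≠ ⊤ :=
    fun k => ENNReal.mul_ne_top (ENNReal.natCast_ne_top k) hc_ne_top
  have hkc_pos : ∀ k : ℕ, 1 ≤ k → 0 < (k : ℝ≥0∞) * c := by
    intro k hk
    refine ENNReal.mul_pos ?_ hc_pos.ne'
    exact_mod_cast (by omega : k ≠ 0)
  -- measurable path version of R
  have hpath : ∀ ω, Measurable fun s : ℝ => R (min s T) ω := by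
    intro ω
    have h1 : Measurable fun s : ℝ => (⟨min s T, Set.mem_Iic.mpr (min_le_right s T)⟩ : Set.Iic T) :=
      Measurable.subtype_mk (measurable_id.min measurable_const)
    have hconst : @Measurable ℝ Ω inferInstance (ℱ T) (fun _ => ω) := @measurable_const Ω ℝ (ℱ T) inferInstance ω
    have h2 := (hRprog T).measurable
    exact h2.comp (h1.prodMk hconst)
  set f : Ω → ℝ → ℝ≥0∞ := fun ω s => ENNReal.ofReal (R (min s T) ω) with hf_def
  have hfm : ∀ ω, Measurable (f ω) := fun ω => ENNReal.measurable_ofReal.comp (hpath ω)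
  set ν : Ω → Measure ℝ := fun ω => (volume.restrict (Set.Ioc 0 T)).withDensity (f ω) with hν_def
  set L : ℝ → Ω → ℝ≥0∞ := fun t ω => ν ω (Set.Ioc 0 t) with hL_def
  have hν_apply : ∀ ω (s : Set ℝ), MeasurableSet s →
      ν ω s = ∫⁻ x in s ∩ Set.Ioc 0 T, f ω x ∂volume := by
    intro ω s hs
    rw [hν_def]
    simp only
    rw [withDensity_apply _ hs, Measure.restrict_restrict hs]
  have hL0 : ∀ ω (t : ℝ), t ≤ 0 → L t ω = 0 := by
    intro ω t ht
    rw [hL_def]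
    simp only
    rw [Set.Ioc_eq_empty (by exact not_lt.mpr ht), measure_empty]
  have hLmono : ∀ ω {s t : ℝ}, s ≤ t → L s ω ≤ L t ω := by
    intro ω s t h
    exact measure_mono (Set.Ioc_subset_Ioc_right h)
  have hLadd : ∀ ω (u v : ℝ), 0 ≤ u → u ≤ v → L v ω = L u ω + ν ω (Set.Ioc u v) := by
    intro ω u v hu huv
    rw [hL_def]
    simp only
    rw [← Set.Ioc_union_Ioc_eq_Ioc hu huv, measure_union (Set.Ioc_disjoint_Ioc_of_le le_rfl) measurableSet_Ioc]
  have hpieceEq : ∀ ω (x y : ℝ), 0 ≤ x → y ≤ T →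
      ν ω (Set.Ioc x y) = ∫⁻ s in Set.Ioc x y, ENNReal.ofReal (R s ω) ∂volume := by
    intro ω x y hx hy
    rw [hν_apply ω _ measurableSet_Ioc,
      Set.inter_eq_self_of_subset_left (Set.Ioc_subset_Ioc hx hy)]
    refine setLIntegral_congr_fun measurableSet_Ioc ?_
    intro s hs
    rw [hf_def]
    simp only
    rw [min_eq_left (hs.2.trans hy)]
  -- adaptedness of L
  have hLmeas : ∀ (t a : ℝ), t ≤ a → Measurable[ℱ a] (fun ω => L t ω) := by
    intro t a hta
    rcases le_or_gt t 0 with ht | ht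
    · have h0 : (fun ω => L t ω) = fun _ => (0 : ℝ≥0∞) := funext fun ω => hL0 ω t ht
      rw [h0]; exact measurable_const
    · set u := min t T with hu_def
      have hu0 : 0 < u := lt_min ht hT
      have huT : u ≤ T := min_le_right _ _
      have huta : u ≤ a := le_trans (min_le_left _ _) hta
      have hH : Measurable[(ℱ u).prod (inferInstance : MeasurableSpace ℝ)]
          (fun p : Ω × ℝ => if p.2 ∈ Set.Ioc (0:ℝ) u then ENNReal.ofReal (R (min p.2 u) p.1) else 0) := by
        refine Measurable.ite ?_ ?_ measurable_const
        · exact (@measurable_snd Ω ℝ (ℱ u) _) measurableSet_Ioc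
        · have hfst : @Measurable (Ω × ℝ) Ω ((ℱ u).prod (inferInstance : MeasurableSpace ℝ)) (ℱ u)
              Prod.fst := @measurable_fst Ω ℝ (ℱ u) inferInstance
          have hiic : @Measurable (Ω × ℝ) (Set.Iic u) ((ℱ u).prod (inferInstance : MeasurableSpace ℝ))
              Subtype.instMeasurableSpace
              (fun p : Ω × ℝ => (⟨min p.2 u, Set.mem_Iic.mpr (min_le_right _ _)⟩ : Set.Iic u)) :=
            Measurable.subtype_mk ((@measurable_snd Ω ℝ (ℱ u) inferInstance).min measurable_const)
          have h1 : @Measurable (Ω × ℝ) (Set.Iic u × Ω) ((ℱ u).prod (inferInstance : MeasurableSpace ℝ))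
              (Subtype.instMeasurableSpace.prod (ℱ u))
              (fun p : Ω × ℝ => ((⟨min p.2 u, Set.mem_Iic.mpr (min_le_right _ _)⟩ : Set.Iic u), p.1)) :=
            Measurable.prodMk hiic hfst
          exact ENNReal.measurable_ofReal.comp ((hRprog u).measurable.comp h1)
      have hmeasu : Measurable[ℱ u] (fun ω =>
          ∫⁻ s, (if s ∈ Set.Ioc (0:ℝ) u then ENNReal.ofReal (R (min s u) ω) else 0) ∂volume) :=
        @Measurable.lintegral_prod_right' Ω ℝ (ℱ u) inferInstance volume inferInstance _ hH
      have heq : (fun ω => L t ω) = (fun ω =>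
          ∫⁻ s, (if s ∈ Set.Ioc (0:ℝ) u then ENNReal.ofReal (R (min s u) ω) else 0) ∂volume) := by
        funext ω
        have h1 : Set.Ioc 0 t ∩ Set.Ioc 0 T = Set.Ioc 0 u := by
          rw [Set.Ioc_inter_Ioc, hu_def]
          norm_num
        rw [hL_def]
        simp only
        rw [hν_apply ω _ measurableSet_Ioc, h1, ← lintegral_indicator measurableSet_Ioc]
        refine lintegral_congr fun s => ?_
        rw [Set.indicator_apply]
        split_ifs with h
        · rw [hf_def]
          simp only
          rw [min_eq_left (h.2.trans huT), min_eq_left h.2]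
        · rfl
      rw [heq]
      exact hmeasu.mono (ℱ.mono huta) le_rfl
  -- left continuity (use form)
  have hLleft : ∀ ω (t : ℝ) (x : ℝ≥0∞), (∀ q : ℚ, (q:ℝ) < t → L q ω ≤ x) → L t ω ≤ x := by
    intro ω t x hq
    rcases le_or_gt t 0 with ht | ht
    · rw [hL0 ω t ht]; exact zero_le
    · have hsing : ν ω {t} = 0 := by
        rw [hν_apply ω _ (measurableSet_singleton t)]
        exact setLIntegral_measure_zero _ _
          (measure_mono_null Set.inter_subset_left Real.volume_singleton)
      have hsub : L t ω ≤ ν ω (Set.Ioo 0 t) + ν ω {t} := by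
        refine le_trans (measure_mono ?_) (measure_union_le _ _)
        intro s hs
        rcases lt_or_eq_of_le hs.2 with h | h
        · exact Or.inl ⟨hs.1, h⟩
        · exact Or.inr h
      rw [hsing, add_zero] at hsub
      refine le_trans hsub ?_
      have hunion : Set.Ioo (0:ℝ) t = ⋃ q : {q : ℚ // 0 < (q:ℝ) ∧ (q:ℝ) < t}, Set.Ioc (0:ℝ) (q:ℝ) := by
        ext s
        simp only [Set.mem_Ioo, Set.mem_iUnion, Set.mem_Ioc]
        constructor
        · rintro ⟨h1, h2⟩
          obtain ⟨q, hq1, hq2⟩ := exists_rat_btwn h2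
          exact ⟨⟨q, lt_trans h1 hq1, hq2⟩, h1, hq1.le⟩
        · rintro ⟨⟨q, hq1, hq2⟩, h1, h2⟩
          exact ⟨h1, lt_of_le_of_lt h2 hq2⟩
      rw [hunion, Directed.measure_iUnion ?_]
      · exact iSup_le fun q => hq q.1 q.2.2
      · intro q q'
        refine ⟨⟨max q.1 q'.1, ?_, ?_⟩, ?_, ?_⟩
        · push_cast; exact lt_max_of_lt_left q.2.1
        · push_cast; exact max_lt q.2.2 q'.2.2
        · refine Set.Ioc_subset_Ioc_right ?_; push_cast; exact le_max_left _ _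
        · refine Set.Ioc_subset_Ioc_right ?_; push_cast; exact le_max_right _ _
  -- right continuity where finite (use form)
  have hLinf : ∀ ω (i t : ℝ) (x : ℝ≥0∞), i < t → L t ω ≠ ⊤ →
      (∀ s, i < s → s ≤ t → x ≤ L s ω) → x ≤ L i ω := by
    intro ω i t x hit hfin hge
    set sn : ℕ → ℝ := fun n => i + (t - i)/(n+1) with hsn
    have hti : 0 < t - i := sub_pos.mpr hit
    have hsn_gt : ∀ n : ℕ, i < sn n := by
      intro n
      rw [hsn]
      simp only
      have : (0:ℝ) < (t - i)/(n+1) := by positivity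
      linarith
    have hsn_le : ∀ n : ℕ, sn n ≤ t := by
      intro n
      rw [hsn]
      simp only
      have h1 : (t - i)/(n+1) ≤ t - i := by
        apply div_le_self hti.le
        have : (0:ℝ) ≤ (n:ℝ) := Nat.cast_nonneg n
        linarith
      linarith
    have hanti : Antitone fun n : ℕ => Set.Ioc (0:ℝ) (sn n) := by
      intro m n hmn
      apply Set.Ioc_subset_Ioc_right
      rw [hsn]
      simp only
      have h1 : ((m:ℝ)+1) ≤ ((n:ℝ)+1) := by exact_mod_cast by omega
      have h2 : (0:ℝ) < (m:ℝ)+1 := by positivity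
      gcongr
    have hiInter : (⋂ n : ℕ, Set.Ioc (0:ℝ) (sn n)) = Set.Ioc 0 i := by
      ext s
      simp only [Set.mem_iInter, Set.mem_Ioc]
      constructor
      · intro h
        refine ⟨(h 0).1, ?_⟩
        by_contra hsi
        push_neg at hsi
        obtain ⟨n, hn⟩ := exists_nat_gt ((t - i)/(s - i))
        have h1 := (h n).2
        have h2 : (t - i)/((n:ℝ)+1) < s - i := by
          rw [div_lt_iff₀ (by positivity)]
          have h3 : t - i < (s - i) * ((n:ℝ)) := by
            rw [← div_lt_iff₀' (by linarith)]
            exact hn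
          nlinarith [sub_pos.mpr hsi]
        rw [hsn] at h1
        simp only at h1
        linarith
      · rintro ⟨h1, h2⟩ n
        exact ⟨h1, h2.trans (hsn_gt n).le⟩
    have hfin0 : ν ω (Set.Ioc (0:ℝ) (sn 0)) ≠ ⊤ :=
      ne_top_of_le_ne_top hfin (measure_mono (Set.Ioc_subset_Ioc_right (hsn_le 0)))
    have htend := tendsto_measure_iInter_atTop
      (fun n => measurableSet_Ioc.nullMeasurableSet) hanti ⟨0, hfin0⟩
    rw [hiInter] at htend
    exact ge_of_tendsto htend (Filter.Eventually.of_forall fun n =>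
      hge (sn n) (hsn_gt n) (hsn_le n))
  -- hitting sets and hitting times
  set A : ℕ → Ω → Set ℝ := fun k ω => {t : ℝ | (0 ≤ t ∧ t ≤ τ ω) ∧ (k : ℝ≥0∞) * c ≤ L t ω}
    with hA_def
  set σ' : ℕ → Ω → ℝ := fun k ω => if h : ∃ m, IsLeast (A k ω) m then h.choose else τ ω
    with hσ'_def
  have hσ'_spec : ∀ k ω (h : ∃ m, IsLeast (A k ω) m), IsLeast (A k ω) (σ' k ω) := by
    intro k ω h
    rw [hσ'_def]
    simp only
    rw [dif_pos h]
    exact h.choose_spec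
  have hσ'_nol : ∀ k ω, ¬(∃ m, IsLeast (A k ω) m) → σ' k ω = τ ω := by
    intro k ω h
    rw [hσ'_def]
    simp only
    rw [dif_neg h]
  have hσ'_eq : ∀ k ω m, IsLeast (A k ω) m → σ' k ω = m :=
    fun k ω m hm => (hσ'_spec k ω ⟨m, hm⟩).unique hm
  have hσ'_mem : ∀ k ω, 0 ≤ σ' k ω ∧ σ' k ω ≤ τ ω := by
    intro k ω
    by_cases h : ∃ m, IsLeast (A k ω) m
    · exact (hσ'_spec k ω h).1.1
    · rw [hσ'_nol k ω h]; exact ⟨hτ0 ω, le_rfl⟩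
  -- value of L at a hitting time
  have hleast_L : ∀ k ω m, 1 ≤ k → IsLeast (A k ω) m → L m ω = (k : ℝ≥0∞) * c := by
    intro k ω m hk hm
    refine le_antisymm ?_ hm.1.2
    refine hLleft ω m _ ?_
    intro q hq
    rcases lt_or_ge (q:ℝ) 0 with h0 | h0
    · rw [hL0 ω q h0.le]; exact zero_le
    · by_contra hcon
      push_neg at hcon
      have h1 : m ≤ (q:ℝ) := hm.2 ⟨⟨h0, le_trans hq.le hm.1.1.2⟩, hcon.le⟩
      exact absurd hq (not_lt.mpr h1)
  -- structure when no least exists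
  have hP4 : ∀ k ω, 1 ≤ k → (A k ω).Nonempty → ¬(∃ m, IsLeast (A k ω) m) →
      0 ≤ sInf (A k ω) ∧ sInf (A k ω) < τ ω ∧ L (sInf (A k ω)) ω < (k : ℝ≥0∞) * c ∧
      (∀ t, sInf (A k ω) < t → t ≤ τ ω → L t ω = ⊤) := by
    intro k ω hk hne hnol
    obtain ⟨s₀, hs₀⟩ := hne
    have hbdd : BddBelow (A k ω) := ⟨0, fun t ht => ht.1.1⟩
    set i := sInf (A k ω) with hi
    have hi0 : 0 ≤ i := le_csInf ⟨s₀, hs₀⟩ (fun t ht => ht.1.1)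
    have hiτ : i ≤ τ ω := le_trans (csInf_le hbdd hs₀) hs₀.1.2
    have hup : ∀ s, i < s → s ≤ τ ω → (k : ℝ≥0∞) * c ≤ L s ω := by
      intro s his hsτ
      obtain ⟨t, ht, hts⟩ := exists_lt_of_csInf_lt ⟨s₀, hs₀⟩ his
      exact le_trans ht.2 (hLmono ω hts.le)
    have hiL : L i ω < (k : ℝ≥0∞) * c := by
      by_contra hcon
      push_neg at hcon
      exact hnol ⟨i, ⟨⟨hi0, hiτ⟩, hcon⟩, fun t ht => csInf_le hbdd ht⟩
    have hiτ' : i < τ ω := by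
      rcases lt_or_eq_of_le hiτ with h | h
      · exact h
      · exfalso
        have h1 : s₀ = i := le_antisymm (h ▸ hs₀.1.2) (csInf_le hbdd hs₀)
        rw [← h1] at hiL
        exact absurd hs₀.2 (not_le.mpr hiL)
    refine ⟨hi0, hiτ', hiL, ?_⟩
    intro t hit htτ
    by_contra hfin
    exact absurd (hLinf ω i t _ hit hfin (fun s hs1 hs2 => hup s hs1 (hs2.trans htτ)))
      (not_le.mpr hiL)
  -- existence of least propagates downwards
  have hP5 : ∀ k k' ω, 1 ≤ k → k ≤ k' → (∃ m, IsLeast (A k' ω) m) → ∃ m, IsLeast (A k ω) m := by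
    intro k k' ω hk hkk' hE
    obtain ⟨m', hm'⟩ := hE
    have hsub : A k' ω ⊆ A k ω := by
      intro t ht
      exact ⟨ht.1, le_trans (mul_le_mul_left (by exact_mod_cast hkk') c) ht.2⟩
    by_contra hnol
    have hne : (A k ω).Nonempty := ⟨m', hsub hm'.1⟩
    obtain ⟨hi0, hiτ', hiL, hinf⟩ := hP4 k ω hk hne hnol
    have him' : sInf (A k ω) ≤ m' := csInf_le ⟨0, fun t ht => ht.1.1⟩ (hsub hm'.1)
    have hlt : sInf (A k ω) < m' := by
      rcases lt_or_eq_of_le him' with h | h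
      · exact h
      · exfalso
        have h2 : (k : ℝ≥0∞) * c ≤ L (sInf (A k ω)) ω := h ▸ (hsub hm'.1).2
        exact absurd h2 (not_le.mpr hiL)
    set t := (sInf (A k ω) + m') / 2 with ht_def
    have ht1 : sInf (A k ω) < t := by rw [ht_def]; linarith
    have ht2 : t < m' := by rw [ht_def]; linarith
    have htτ : t ≤ τ ω := le_trans ht2.le hm'.1.1.2
    have htA : t ∈ A k' ω := by
      refine ⟨⟨le_trans hi0 ht1.le, htτ⟩, ?_⟩
      rw [hinf t ht1 htτ]
      exact le_top
    exact absurd (hm'.2 htA) (not_le.mpr ht2)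
  -- the key stopping time event identity
  have hkey : ∀ (k : ℕ), 1 ≤ k → ∀ (a : ℝ), 0 ≤ a →
      {ω | σ' k ω ≤ a} = {ω | τ ω ≤ a} ∪ {ω | (k : ℝ≥0∞) * c ≤
        ⨆ q : ℚ, if 0 ≤ (q:ℝ) ∧ (q:ℝ) ≤ min a (τ ω) ∧ L (q:ℝ) ω < (k : ℝ≥0∞) * c
          then L (q:ℝ) ω else 0} := by
    intro k hk a ha
    ext ω
    simp only [Set.mem_setOf_eq, Set.mem_union]
    set b := min a (τ ω) with hb
    have hb0 : 0 ≤ b := le_min ha (hτ0 ω)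
    set C := {t : ℝ | 0 ≤ t ∧ t ≤ b ∧ L t ω < (k : ℝ≥0∞) * c} with hC
    have hC0 : (0:ℝ) ∈ C := ⟨le_rfl, hb0, by rw [hL0 ω 0 le_rfl]; exact hkc_pos k hk⟩
    have hCne : C.Nonempty := ⟨0, hC0⟩
    have hCbdd : BddAbove C := ⟨b, fun t ht => ht.2.1⟩
    set i := sSup C with hidef
    have hi0 : 0 ≤ i := le_csSup hCbdd hC0
    have hib : i ≤ b := csSup_le hCne fun t ht => ht.2.1
    have hW1 : (⨆ q : ℚ, if 0 ≤ (q:ℝ) ∧ (q:ℝ) ≤ b ∧ L (q:ℝ) ω < (k : ℝ≥0∞) * c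
        then L (q:ℝ) ω else 0) = L i ω := by
      apply le_antisymm
      · refine iSup_le fun q => ?_
        split_ifs with hq
        · exact hLmono ω (le_csSup hCbdd hq)
        · exact zero_le
      · refine hLleft ω i _ fun q hqi => ?_
        rcases lt_or_ge (q:ℝ) 0 with h0 | h0
        · rw [hL0 ω q h0.le]; exact zero_le
        · obtain ⟨t, htC, hqt⟩ := exists_lt_of_lt_csSup hCne hqi
          have hqC : (q:ℝ) ∈ C :=
            ⟨h0, le_trans hqt.le htC.2.1, lt_of_le_of_lt (hLmono ω hqt.le) htC.2.2⟩
          exact le_iSup_of_le q (le_of_eq (if_pos hqC).symm)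
    rw [hW1]
    constructor
    · intro h
      by_cases hτa : τ ω ≤ a
      · exact Or.inl hτa
      · right
        push_neg at hτa
        have hba : b = a := min_eq_left hτa.le
        by_cases hE : ∃ m, IsLeast (A k ω) m
        · have hm := hσ'_spec k ω hE
          have hmi : σ' k ω ≤ i := by
            by_contra hcon
            push_neg at hcon
            set t := (i + σ' k ω) / 2 with ht_def
            have ht1 : i < t := by rw [ht_def]; linarith
            have ht2 : t < σ' k ω := by rw [ht_def]; linarith
            have htC : t ∈ C := by
              refine ⟨le_trans hi0 ht1.le, ?_, ?_⟩
              · rw [hba]; exact le_trans ht2.le h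
              · by_contra hge
                push_neg at hge
                have h3 := hm.2 ⟨⟨le_trans hi0 ht1.le,
                  le_trans (le_trans ht2.le h) hτa.le⟩, hge⟩
                exact absurd ht2 (not_lt.mpr h3)
            exact absurd (le_csSup hCbdd htC) (not_le.mpr ht1)
          exact le_trans hm.1.2 (hLmono ω hmi)
        · rw [hσ'_nol k ω hE] at h
          exact absurd h (not_le.mpr hτa)
    · intro h
      rcases h with hτa | hLi
      · exact le_trans (hσ'_mem k ω).2 hτa
      · by_cases hτa : τ ω ≤ a
        · exact le_trans (hσ'_mem k ω).2 hτa
        · push_neg at hτa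
          have hba : b = a := min_eq_left hτa.le
          have hleast : IsLeast (A k ω) i := by
            refine ⟨⟨⟨hi0, le_trans (hib.trans_eq hba) hτa.le⟩, hLi⟩, ?_⟩
            intro t ht
            by_contra hcon
            push_neg at hcon
            obtain ⟨t', ht'C, htt'⟩ := exists_lt_of_lt_csSup hCne hcon
            exact absurd (le_trans ht.2 (hLmono ω htt'.le)) (not_le.mpr ht'C.2.2)
          rw [hσ'_eq k ω i hleast]
          exact hib.trans_eq hba
  -- σ' k is a stopping time for k ≥ 1
  have hσ'_stop : ∀ k, 1 ≤ k → IsStoppingTime ℱ (fun ω => (σ' k ω : WithTop ℝ)) := by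
    intro k hk a
    simp only [WithTop.coe_le_coe]
    rcases lt_or_ge a 0 with ha | ha
    · have hempty : {ω | σ' k ω ≤ a} = ∅ := by
        ext ω
        simp only [Set.mem_setOf_eq, Set.mem_empty_iff_false, iff_false, not_le]
        exact lt_of_lt_of_le ha (hσ'_mem k ω).1
      rw [hempty]
      exact @MeasurableSet.empty _ (ℱ a)
    · rw [hkey k hk a ha]
      refine MeasurableSet.union (by simpa only [WithTop.coe_le_coe] using hτ a) ?_
      have hM : Measurable[ℱ a] (fun ω => ⨆ q : ℚ,
          if 0 ≤ (q:ℝ) ∧ (q:ℝ) ≤ min a (τ ω) ∧ L (q:ℝ) ω < (k : ℝ≥0∞) * c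
            then L (q:ℝ) ω else 0) := by
        refine Measurable.iSup fun q => ?_
        by_cases hq : 0 ≤ (q:ℝ) ∧ (q:ℝ) ≤ a
        · have hset : MeasurableSet[ℱ a]
              {ω | 0 ≤ (q:ℝ) ∧ (q:ℝ) ≤ min a (τ ω) ∧ L (q:ℝ) ω < (k : ℝ≥0∞) * c} := by
            have h1 : {ω | 0 ≤ (q:ℝ) ∧ (q:ℝ) ≤ min a (τ ω) ∧ L (q:ℝ) ω < (k : ℝ≥0∞) * c}
                = {ω | (q:ℝ) ≤ τ ω} ∩ {ω | L (q:ℝ) ω < (k : ℝ≥0∞) * c} := by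
              ext ω
              simp only [Set.mem_setOf_eq, Set.mem_inter_iff, le_min_iff]
              constructor
              · rintro ⟨_, ⟨_, h2⟩, h3⟩; exact ⟨h2, h3⟩
              · rintro ⟨h2, h3⟩; exact ⟨hq.1, ⟨hq.2, h2⟩, h3⟩
            rw [h1]
            refine MeasurableSet.inter ?_ ?_
            · have h2 : MeasurableSet[ℱ a] {ω | τ ω < (q:ℝ)} :=
                by simpa only [WithTop.coe_lt_coe] using hτ.measurableSet_lt_le hq.2
              have h4 : {ω | (q:ℝ) ≤ τ ω} = {ω | τ ω < (q:ℝ)}ᶜ := by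
                ext ω; simp [not_lt]
              rw [h4]
              exact h2.compl
            · exact measurableSet_lt (hLmeas (q:ℝ) a hq.2) measurable_const
          exact Measurable.ite hset (hLmeas (q:ℝ) a hq.2) measurable_const
        · have h0 : (fun ω => if 0 ≤ (q:ℝ) ∧ (q:ℝ) ≤ min a (τ ω) ∧
              L (q:ℝ) ω < (k : ℝ≥0∞) * c then L (q:ℝ) ω else 0) = fun _ => (0:ℝ≥0∞) := by
            funext ω
            rw [if_neg]
            rintro ⟨h1, h2, _⟩
            exact hq ⟨h1, le_trans h2 (min_le_left _ _)⟩
          rw [h0]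
          exact measurable_const
      exact measurableSet_le measurable_const hM
  -- the final family
  set σ : ℕ → Ω → ℝ := fun k ω => if k = 0 then 0 else if N + 1 ≤ k then τ ω else σ' k ω
    with hσdef
  have hσ0 : ∀ ω, σ 0 ω = 0 := by intro ω; simp [hσdef]
  have hσtop : ∀ k ω, N + 1 ≤ k → σ k ω = τ ω := by
    intro k ω hk
    rw [hσdef]
    simp only
    rw [if_neg (by omega), if_pos hk]
  have hσmid : ∀ k ω, 1 ≤ k → k ≤ N → σ k ω = σ' k ω := by
    intro k ω h1 h2
    rw [hσdef]
    simp only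
    rw [if_neg (by omega), if_neg (by omega)]
  have hσmem : ∀ k ω, 0 ≤ σ k ω ∧ σ k ω ≤ τ ω := by
    intro k ω
    rcases Nat.eq_zero_or_pos k with rfl | h1
    · rw [hσ0]; exact ⟨le_rfl, hτ0 ω⟩
    · by_cases h2 : N + 1 ≤ k
      · rw [hσtop k ω h2]; exact ⟨hτ0 ω, le_rfl⟩
      · rw [hσmid k ω h1 (by omega)]; exact hσ'_mem k ω
  have hσmono : ∀ k, k ≤ N → ∀ ω, σ k ω ≤ σ (k + 1) ω := by
    intro k hkN ω
    rcases Nat.eq_zero_or_pos k with rfl | hk1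
    · rw [hσ0]; exact (hσmem 1 ω).1
    · rw [hσmid k ω hk1 hkN]
      by_cases hsucc : N + 1 ≤ k + 1
      · rw [hσtop (k+1) ω hsucc]; exact (hσ'_mem k ω).2
      · rw [hσmid (k+1) ω (by omega) (by omega)]
        by_cases hE : ∃ m, IsLeast (A (k+1) ω) m
        · obtain ⟨m1, hm1⟩ := hE
          obtain ⟨m0, hm0⟩ := hP5 k (k+1) ω hk1 (by omega) ⟨m1, hm1⟩
          rw [hσ'_eq k ω m0 hm0, hσ'_eq (k+1) ω m1 hm1]
          refine hm0.2 ⟨hm1.1.1, le_trans (mul_le_mul_left ?_ c) hm1.1.2⟩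
          exact_mod_cast Nat.le_succ k
        · rw [hσ'_nol (k+1) ω hE]; exact (hσ'_mem k ω).2
  refine ⟨N, σ, ?_, hσ0, fun ω => hσtop (N+1) ω le_rfl, hσmono, ?_⟩
  · -- stopping times
    intro k
    rcases Nat.eq_zero_or_pos k with rfl | hk1
    · have h0 : σ 0 = fun _ => (0:ℝ) := funext hσ0
      rw [h0]
      exact isStoppingTime_const ℱ 0
    · by_cases h2 : N + 1 ≤ k
      · have h0 : σ k = τ := funext fun ω => hσtop k ω h2
        rw [h0]
        exact hτ
      · have h0 : σ k = σ' k := funext fun ω => hσmid k ω hk1 (by omega)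
        rw [h0]
        exact hσ'_stop k hk1
  · -- smallness of the pieces
    intro k hk1 hk2
    obtain ⟨j, rfl⟩ : ∃ j, k = j + 1 := ⟨k - 1, by omega⟩
    simp only [Nat.add_sub_cancel]
    filter_upwards [hR] with ω hω
    have hIntEq : ∀ x y : ℝ, 0 ≤ x → y ≤ T →
        ∫ s in Set.Ioc x y, R s ω = (ν ω (Set.Ioc x y)).toReal := by
      intro x y hx hy
      have hae : AEStronglyMeasurable (fun s => R s ω) (volume.restrict (Set.Ioc x y)) := by
        refine ⟨fun s => R (min s T) ω, (hpath ω).stronglyMeasurable, ?_⟩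
        refine (ae_restrict_iff' measurableSet_Ioc).mpr (Filter.Eventually.of_forall ?_)
        intro s hs
        show R s ω = R (min s T) ω
        rw [min_eq_left (hs.2.trans hy)]
      rw [integral_eq_lintegral_of_nonneg_ae
        (Filter.Eventually.of_forall fun s => hRnonneg s ω) hae, ← hpieceEq ω x y hx hy]
    have hx0 : 0 ≤ σ j ω := (hσmem j ω).1
    have hxτ : σ j ω ≤ τ ω := (hσmem j ω).2
    have hyτ : σ (j+1) ω ≤ τ ω := (hσmem (j+1) ω).2
    have hyT : σ (j+1) ω ≤ T := le_trans hyτ (hτT ω)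
    have hxy : σ j ω ≤ σ (j+1) ω := hσmono j (by omega) ω
    suffices hsuff : ν ω (Set.Ioc (σ j ω) (σ (j+1) ω)) ≤ c ∨
        ν ω (Set.Ioc (σ j ω) (σ (j+1) ω)) = ⊤ by
      rw [hIntEq _ _ hx0 hyT]
      rcases hsuff with h | h
      · have h1 : (ν ω (Set.Ioc (σ j ω) (σ (j+1) ω))).toReal ≤ δ / 2 := by
          have h2 := ENNReal.toReal_mono hc_ne_top h
          rwa [hc_def, ENNReal.toReal_ofReal hδ2.le] at h2
        linarith
      · rw [h]
        simpa using hδ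
    -- compute L of σ j when it comes from a least element, plus "L (σ j) finite" info
    have hLσj : (j = 0 ∧ σ j ω = 0) ∨
        (1 ≤ j ∧ ((∃ m, IsLeast (A j ω) m) ∧ L (σ j ω) ω = (j : ℝ≥0∞) * c) ∨
          1 ≤ j ∧ ¬(∃ m, IsLeast (A j ω) m) ∧ σ j ω = τ ω) := by
      rcases Nat.eq_zero_or_pos j with rfl | hj1
      · exact Or.inl ⟨rfl, hσ0 ω⟩
      · right
        by_cases hEj : ∃ m, IsLeast (A j ω) m
        · left
          refine ⟨hj1, hEj, ?_⟩
          obtain ⟨m0, hm0⟩ := hEj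
          rw [hσmid j ω hj1 (by omega), hσ'_eq j ω m0 hm0]
          exact hleast_L j ω m0 hj1 hm0
        · exact Or.inr ⟨hj1, hEj, by rw [hσmid j ω hj1 (by omega)]; exact hσ'_nol j ω hEj⟩
    by_cases hjN : j + 1 ≤ N
    · have hy' : σ (j+1) ω = σ' (j+1) ω := hσmid (j+1) ω (by omega) hjN
      by_cases hE : ∃ m, IsLeast (A (j+1) ω) m
      · -- both hitting: increment is exactly c
        left
        have hmy : IsLeast (A (j+1) ω) (σ (j+1) ω) := by
          rw [hy']; exact hσ'_spec _ ω hE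
        have hLy : L (σ (j+1) ω) ω = ((j+1 : ℕ) : ℝ≥0∞) * c :=
          hleast_L (j+1) ω _ (by omega) hmy
        have hLx : L (σ j ω) ω = (j : ℝ≥0∞) * c := by
          rcases hLσj with ⟨hj0, hx0'⟩ | ⟨hj1, hEj, hLxv⟩ | ⟨hj1, hEj, hxτ'⟩
          · rw [hx0', hL0 ω 0 le_rfl, hj0]; simp
          · exact hLxv
          · exact absurd (hP5 j (j+1) ω hj1 (by omega) hE) hEj
        have hadd := hLadd ω (σ j ω) (σ (j+1) ω) hx0 hxy
        rw [hLx, hLy] at hadd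
        have hcast : ((j+1 : ℕ) : ℝ≥0∞) * c = (j : ℝ≥0∞) * c + c := by
          push_cast
          ring
        rw [hcast] at hadd
        exact ((ENNReal.add_right_inj (hkc_ne_top j)).mp hadd.symm).le
      · have hyτ' : σ (j+1) ω = τ ω := by rw [hy']; exact hσ'_nol _ ω hE
        by_cases hne : (A (j+1) ω).Nonempty
        · -- jump to infinity before τ
          obtain ⟨hi0', hiτ', hiL', hinf⟩ := hP4 (j+1) ω (by omega) hne hE
          have hLτ : L (τ ω) ω = ⊤ := hinf (τ ω) hiτ' le_rfl
          rcases eq_or_lt_of_le hxτ with heq | hlt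
          · left
            rw [hyτ', ← heq, Set.Ioc_self, measure_empty]
            exact zero_le
          · have hLxfin : L (σ j ω) ω ≠ ⊤ := by
              rcases hLσj with ⟨hj0, hx0'⟩ | ⟨hj1, hEj, hLxv⟩ | ⟨hj1, hEj, hxτ'⟩
              · rw [hx0', hL0 ω 0 le_rfl]; exact ENNReal.zero_ne_top
              · rw [hLxv]; exact hkc_ne_top j
              · rw [hxτ'] at hlt; exact absurd hlt (lt_irrefl _)
            right
            rw [hyτ']
            have hadd := hLadd ω (σ j ω) (τ ω) hx0 hlt.le
            rw [hLτ] at hadd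
            by_contra hfin
            exact (ENNReal.add_ne_top.mpr ⟨hLxfin, hfin⟩) hadd.symm
        · -- A (j+1) empty : total mass below (j+1) c
          left
          have hLτlt : L (τ ω) ω < ((j+1 : ℕ) : ℝ≥0∞) * c := by
            by_contra hcon
            push_neg at hcon
            exact hne ⟨τ ω, ⟨⟨hτ0 ω, le_rfl⟩, hcon⟩⟩
          rw [hyτ']
          have hadd := hLadd ω (σ j ω) (τ ω) hx0 hxτ
          rcases hLσj with ⟨hj0, hx0'⟩ | ⟨hj1, hEj, hLxv⟩ | ⟨hj1, hEj, hxτ'⟩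
          · have h5 : ν ω (Set.Ioc (σ j ω) (τ ω)) = L (τ ω) ω := by
              rw [hx0', hL_def]
            rw [h5]
            refine le_of_lt (lt_of_lt_of_le hLτlt ?_)
            rw [hj0]
            norm_num
          · rw [hLxv] at hadd
            have hcast : ((j+1 : ℕ) : ℝ≥0∞) * c = (j : ℝ≥0∞) * c + c := by
              push_cast
              ring
            rw [hadd, hcast] at hLτlt
            exact le_of_lt ((ENNReal.add_lt_add_iff_left (hkc_ne_top j)).mp hLτlt)
          · rw [hxτ', Set.Ioc_self, measure_empty]
            exact zero_le
    · -- last piece: k = N + 1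
      have hjN' : j = N := by omega
      subst hjN'
      have hyτ' : σ (N+1) ω = τ ω := hσtop (N+1) ω le_rfl
      by_cases hEN : ∃ m, IsLeast (A N ω) m
      · have hLx : L (σ N ω) ω = (N : ℝ≥0∞) * c := by
          rcases hLσj with ⟨hj0, _⟩ | ⟨hj1, hEj, hLxv⟩ | ⟨hj1, hEj, hxτ'⟩
          · omega
          · exact hLxv
          · exact absurd hEN hEj
        by_cases hfin : L (τ ω) ω = ⊤
        · rcases eq_or_lt_of_le hxτ with heq | hlt
          · left
            rw [hyτ', ← heq, Set.Ioc_self, measure_empty]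
            exact zero_le
          · right
            rw [hyτ']
            have hadd := hLadd ω (σ N ω) (τ ω) hx0 hlt.le
            rw [hfin, hLx] at hadd
            by_contra hne'
            exact (ENNReal.add_ne_top.mpr ⟨hkc_ne_top N, hne'⟩) hadd.symm
        · exfalso
          have hτint : ∫ s in Set.Ioc 0 (τ ω), R s ω = (L (τ ω) ω).toReal := by
            rw [hIntEq 0 (τ ω) le_rfl (hτT ω), hL_def]
          have h1 : (L (τ ω) ω).toReal < κ := by rw [← hτint]; exact hω
          have h2 : L (τ ω) ω < ENNReal.ofReal κ :=
            (ENNReal.lt_ofReal_iff_toReal_lt hfin).mpr h1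
          have h3 : L (τ ω) ω < (N : ℝ≥0∞) * c := lt_of_lt_of_le h2 hκN
          have h5 : L (σ N ω) ω ≤ L (τ ω) ω := hLmono ω hxτ
          rw [hLx] at h5
          exact absurd h3 (not_lt.mpr h5)
      · left
        have hxτ'' : σ N ω = τ ω := by
          rw [hσmid N ω hN1 le_rfl]
          exact hσ'_nol N ω hEN
        rw [hyτ', hxτ'', Set.Ioc_self, measure_empty]
        exact zero_le
end

section
/- Suppose X is a separable Banach space, D ⊆ X is a dense subset, X* is the continuous dual of X with dual pairing ⟨·,·⟩, and (E, 𝓔, μ) is a finite measure space. Let p ∈ (1, ∞) and let q be the conjugate exponent, 1/p + 1/q = 1. Assume u and u_n (n ∈ ℕ) belong to L^p(E; X*), that {u_n} is uniformly bounded in L^p(E; X*), and that for every y ∈ D, ⟨u_n(e), y⟩ → ⟨u(e), y⟩ for μ-almost every e ∈ E. Then u_n converges to u in the weak-* sense in L^p(E; X*): for every v ∈ L^q(E; X), ∫_E ⟨u_n(e), v(e)⟩ dμ(e) → ∫_E ⟨u(e), v(e)⟩ dμ(e) as n → ∞. -/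
open MeasureTheory Filter
open scoped ENNReal

section Aux

variable {X : Type*} [NormedAddCommGroup X] [NormedSpace ℝ X]
  {E : Type*} [MeasurableSpace E] {μ : Measure E}

private lemma aux_pairing_aesm {w : E → X →L[ℝ] ℝ} {z : E → X}
    (hw : AEStronglyMeasurable w μ) (hz : AEStronglyMeasurable z μ) :
    AEStronglyMeasurable (fun e => w e (z e)) μ :=
  (ContinuousLinearMap.id ℝ (X →L[ℝ] ℝ)).aestronglyMeasurable_comp₂ hw hz

private lemma aux_pairing_eLpNorm {P Q : ℝ≥0∞} (hPQ : 1 / (1 : ℝ≥0∞) = 1 / P + 1 / Q)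
    (w : E → X →L[ℝ] ℝ) (z : E → X)
    (hw : AEStronglyMeasurable w μ) (hz : AEStronglyMeasurable z μ) :
    eLpNorm (fun e => w e (z e)) 1 μ ≤ eLpNorm w P μ * eLpNorm z Q μ :=
  by haveI : ENNReal.HolderTriple P Q 1 := ⟨by simpa [one_div] using hPQ.symm⟩
     simpa using eLpNorm_le_eLpNorm_mul_eLpNorm_of_nnnorm hw hz (fun f x => f x) 1
      (Eventually.of_forall fun _ => by rw [one_mul]; exact ContinuousLinearMap.le_opNNNorm _ _)

private lemma aux_pairing_integrable {P Q : ℝ≥0∞} (hPQ : 1 / (1 : ℝ≥0∞) = 1 / P + 1 / Q)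
    {w : E → X →L[ℝ] ℝ} {z : E → X}
    (hw : MemLp w P μ) (hz : MemLp z Q μ) :
    Integrable (fun e => w e (z e)) μ := by
  rw [← memLp_one_iff_integrable]
  exact ⟨aux_pairing_aesm hw.1 hz.1,
    lt_of_le_of_lt (aux_pairing_eLpNorm hPQ _ _ hw.1 hz.1)
      (ENNReal.mul_lt_top hw.2 hz.2)⟩

/-- Vitali-type convergence for a uniformly `Lᵖ`-bounded sequence of real functions
converging a.e., on a finite measure space: set integrals converge. -/
private lemma aux_setIntegral_tendsto [IsFiniteMeasure μ] {p q : ℝ}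
    (hpq : Real.HolderConjugate p q)
    (g : E → ℝ) (gn : ℕ → E → ℝ)
    (hg : MemLp g (ENNReal.ofReal p) μ)
    (hgn : ∀ n, AEStronglyMeasurable (gn n) μ)
    {C : ℝ≥0∞} (hCtop : C ≠ ⊤) (hC : ∀ n, eLpNorm (gn n) (ENNReal.ofReal p) μ ≤ C)
    (hae : ∀ᵐ e ∂μ, Tendsto (fun n => gn n e) atTop (nhds (g e)))
    {A : Set E} (hA : MeasurableSet A) :
    Tendsto (fun n => ∫ e in A, gn n e ∂μ) atTop (nhds (∫ e in A, g e ∂μ)) := by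
  have hq0 : 0 < q := hpq.symm.pos
  have hP1 : (1 : ℝ≥0∞) ≤ ENNReal.ofReal p := by
    rw [← ENNReal.ofReal_one]
    exact ENNReal.ofReal_le_ofReal hpq.lt.le
  have hQ0 : ENNReal.ofReal q ≠ 0 := (ENNReal.ofReal_pos.2 hq0).ne'
  have hQtop : ENNReal.ofReal q ≠ ∞ := ENNReal.ofReal_ne_top
  -- uniform integrability in L¹
  have hui : UnifIntegrable gn 1 μ := by
    intro ε hε
    set M : ℝ := C.toReal + 1 with hM
    have hM0 : 0 < M := by positivity
    have hCM : C ≤ ENNReal.ofReal M := by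
      rw [← ENNReal.ofReal_toReal hCtop]
      exact ENNReal.ofReal_le_ofReal (by simp [hM])
    refine ⟨(ε / M) ^ q, Real.rpow_pos_of_pos (by positivity) q, fun i s hs hμs => ?_⟩
    have hsplit : s.indicator (gn i) = fun e => s.indicator (fun _ => (1 : ℝ)) e * gn i e := by
      ext e
      by_cases he : e ∈ s <;> simp [he]
    rw [hsplit]
    have hQP' : 1 / (1 : ℝ≥0∞) = 1 / ENNReal.ofReal q + 1 / ENNReal.ofReal p := by
      simp only [one_div, inv_one]
      rw [add_comm]
      exact hpq.inv_add_inv_ennreal.symm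
    have h1 : eLpNorm (fun e => s.indicator (fun _ => (1 : ℝ)) e * gn i e) 1 μ
        ≤ eLpNorm (s.indicator fun _ => (1 : ℝ)) (ENNReal.ofReal q) μ
            * eLpNorm (gn i) (ENNReal.ofReal p) μ :=
      by haveI : ENNReal.HolderTriple (ENNReal.ofReal q) (ENNReal.ofReal p) 1 :=
          ⟨by simpa [one_div] using hQP'.symm⟩
         simpa using eLpNorm_le_eLpNorm_mul_eLpNorm_of_nnnorm
          ((stronglyMeasurable_const.indicator hs).aestronglyMeasurable) (hgn i) (· * ·) 1
          (Eventually.of_forall fun e => by rw [one_mul]; exact le_of_eq (nnnorm_mul _ _))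
    have h2 : eLpNorm (s.indicator fun _ => (1 : ℝ)) (ENNReal.ofReal q) μ = μ s ^ (1 / q) := by
      rw [eLpNorm_indicator_const hs hQ0 hQtop]
      simp [ENNReal.toReal_ofReal hq0.le]
    refine h1.trans ?_
    rw [h2]
    calc μ s ^ (1 / q) * eLpNorm (gn i) (ENNReal.ofReal p) μ
        ≤ ENNReal.ofReal ((ε / M) ^ q) ^ (1 / q) * ENNReal.ofReal M :=
          mul_le_mul' (ENNReal.rpow_le_rpow hμs (by positivity)) ((hC i).trans hCM)
      _ = ENNReal.ofReal (ε / M) * ENNReal.ofReal M := by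
          rw [← ENNReal.ofReal_rpow_of_pos (by positivity), ← ENNReal.rpow_mul,
            mul_one_div_cancel hq0.ne', ENNReal.rpow_one]
      _ = ENNReal.ofReal ε := by
          rw [← ENNReal.ofReal_mul (by positivity)]
          congr 1
          field_simp
  -- MemLp and integrability
  have hgnP : ∀ n, MemLp (gn n) (ENNReal.ofReal p) μ :=
    fun n => ⟨hgn n, (hC n).trans_lt hCtop.lt_top⟩
  have hgnI : ∀ n, Integrable (gn n) μ :=
    fun n => memLp_one_iff_integrable.1 ((hgnP n).mono_exponent hP1)
  have hgI : Integrable g μ :=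
    memLp_one_iff_integrable.1 (hg.mono_exponent hP1)
  -- Vitali convergence in L¹
  have key : Tendsto (fun n => eLpNorm (gn n - g) 1 μ) atTop (nhds 0) :=
    tendsto_Lp_finite_of_tendsto_ae le_rfl ENNReal.one_ne_top hgn
      (hg.mono_exponent hP1) hui hae
  have htoReal : Tendsto (fun n => (eLpNorm (gn n - g) 1 μ).toReal) atTop (nhds 0) := by
    simpa [Function.comp_def] using (ENNReal.tendsto_toReal (by simp)).comp key
  have hb : ∀ n, ‖(∫ e in A, gn n e ∂μ) - ∫ e in A, g e ∂μ‖
      ≤ (eLpNorm (gn n - g) 1 μ).toReal := by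
    intro n
    rw [← integral_sub ((hgnI n).restrict) (hgI.restrict)]
    refine (norm_integral_le_integral_norm _).trans ?_
    have h1 : ∫ e in A, ‖gn n e - g e‖ ∂μ ≤ ∫ e, ‖gn n e - g e‖ ∂μ :=
      setIntegral_le_integral ((hgnI n).sub hgI).norm
        (Eventually.of_forall fun e => norm_nonneg _)
    have h2 : ∫ e, ‖gn n e - g e‖ ∂μ = (eLpNorm (gn n - g) 1 μ).toReal := by
      rw [eLpNorm_one_eq_lintegral_enorm,
        ← integral_norm_eq_lintegral_enorm ((hgn n).sub hg.1)]
      rfl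
    linarith
  have := squeeze_zero_norm hb htoReal
  exact tendsto_sub_nhds_zero_iff.1 this

end Aux

/-- Lemma 4.2 [GZ]: if `X` is a separable Banach space, `D ⊆ X` is dense, `(E, μ)` is a
finite measure space, `p ∈ (1,∞)` with conjugate exponent `q`, and `u_n, u ∈ Lᵖ(E; X*)`
with `(u_n)` uniformly bounded in `Lᵖ(E; X*)` and `⟨u_n, y⟩ → ⟨u, y⟩` μ-a.e. for each
`y ∈ D`, then `u_n ⇀* u` in `Lᵖ(E; X*)`: for every `v ∈ L^q(E; X)`,
`∫ ⟨u_n, v⟩ dμ → ∫ ⟨u, v⟩ dμ`. -/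
theorem weakStar_convergence_of_ae_pointwise
    {X : Type*} [NormedAddCommGroup X] [NormedSpace ℝ X] [CompleteSpace X]
    [TopologicalSpace.SeparableSpace X]
    (D : Set X) (hD : Dense D)
    {E : Type*} [MeasurableSpace E] (μ : Measure E) [IsFiniteMeasure μ]
    (p q : ℝ) (hp : 1 < p) (hpq : 1 / p + 1 / q = 1)
    (u : E → X →L[ℝ] ℝ) (un : ℕ → E → X →L[ℝ] ℝ)
    (hu : MemLp u (ENNReal.ofReal p) μ)
    (hun : ∀ n, MemLp (un n) (ENNReal.ofReal p) μ)
    (hbdd : ∃ C : ℝ≥0∞, C < ⊤ ∧ ∀ n, eLpNorm (un n) (ENNReal.ofReal p) μ ≤ C)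
    (hconv : ∀ y ∈ D, ∀ᵐ e ∂μ, Tendsto (fun n => un n e y) atTop (nhds (u e y))) :
    ∀ v : E → X, MemLp v (ENNReal.ofReal q) μ →
      Tendsto (fun n => ∫ e, un n e (v e) ∂μ) atTop (nhds (∫ e, u e (v e) ∂μ)) := by
  obtain ⟨C, hCt, hC⟩ := hbdd
  have hpq' : p.HolderConjugate q := Real.holderConjugate_iff.mpr ⟨hp, by simpa [one_div] using hpq⟩
  have hq1 : 1 < q := hpq'.symm.lt
  have hq0 : 0 < q := hpq'.symm.pos
  set P : ℝ≥0∞ := ENNReal.ofReal p with hPdef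
  set Q : ℝ≥0∞ := ENNReal.ofReal q with hQdef
  have hQ0 : Q ≠ 0 := (ENNReal.ofReal_pos.2 hq0).ne'
  have hQtop : Q ≠ ∞ := ENNReal.ofReal_ne_top
  have hQP : 1 / (1 : ℝ≥0∞) = 1 / P + 1 / Q := by
    simp only [one_div, inv_one]
    exact hpq'.inv_add_inv_ennreal.symm
  have hInt : ∀ (w : E → X →L[ℝ] ℝ) (z : E → X), MemLp w P μ → MemLp z Q μ →
      Integrable (fun e => w e (z e)) μ :=
    fun w z hw hz => aux_pairing_integrable hQP hw hz
  -- Step A: closure under approximation in `L^q`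
  have happrox : ∀ v : E → X, MemLp v Q μ →
      (∀ ε : ℝ, 0 < ε → ∃ w : E → X, MemLp w Q μ ∧
        eLpNorm (v - w) Q μ ≤ ENNReal.ofReal ε ∧
        Tendsto (fun n => ∫ e, un n e (w e) ∂μ) atTop (nhds (∫ e, u e (w e) ∂μ))) →
      Tendsto (fun n => ∫ e, un n e (v e) ∂μ) atTop (nhds (∫ e, u e (v e) ∂μ)) := by
    intro v hv H
    rw [Metric.tendsto_atTop]
    intro ε hε
    set K : ℝ := C.toReal + (eLpNorm u P μ).toReal + 1 with hK
    have hK0 : 0 < K := by positivity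
    set ε' : ℝ := ε / (3 * K) with hε'def
    have hε' : 0 < ε' := by positivity
    obtain ⟨w, hw, hvw, hGw⟩ := H ε' hε'
    have est : ∀ f : E → X →L[ℝ] ℝ, MemLp f P μ →
        |(∫ e, f e (v e) ∂μ) - ∫ e, f e (w e) ∂μ| ≤ (eLpNorm f P μ).toReal * ε' := by
      intro f hf
      have hvmw : MemLp (v - w) Q μ := hv.sub hw
      have h1 : (∫ e, f e (v e) ∂μ) - ∫ e, f e (w e) ∂μ = ∫ e, f e (v e - w e) ∂μ := by
        rw [← integral_sub (hInt f v hf hv) (hInt f w hf hw)]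
        exact integral_congr_ae (Eventually.of_forall fun e => (map_sub (f e) _ _).symm)
      rw [h1]
      have h2 : |∫ e, f e (v e - w e) ∂μ| ≤ ∫ e, ‖f e (v e - w e)‖ ∂μ := by
        simpa [Real.norm_eq_abs] using norm_integral_le_integral_norm fun e => f e (v e - w e)
      have h3 : ∫ e, ‖f e (v e - w e)‖ ∂μ
          = (eLpNorm (fun e => f e (v e - w e)) 1 μ).toReal := by
        rw [eLpNorm_one_eq_lintegral_enorm,
          ← integral_norm_eq_lintegral_enorm (aux_pairing_aesm hf.1
            (show AEStronglyMeasurable (fun e => v e - w e) μ from hvmw.1))]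
      have h4 : eLpNorm (fun e => f e (v e - w e)) 1 μ ≤ eLpNorm f P μ * ENNReal.ofReal ε' :=
        (aux_pairing_eLpNorm hQP f _ hf.1 hvmw.1).trans (mul_le_mul_right hvw _)
      have h5 : (eLpNorm (fun e => f e (v e - w e)) 1 μ).toReal
          ≤ (eLpNorm f P μ).toReal * ε' := by
        have := ENNReal.toReal_mono
          (ENNReal.mul_ne_top hf.eLpNorm_ne_top ENNReal.ofReal_ne_top) h4
        rwa [ENNReal.toReal_mul, ENNReal.toReal_ofReal hε'.le] at this
      calc |∫ e, f e (v e - w e) ∂μ| ≤ ∫ e, ‖f e (v e - w e)‖ ∂μ := h2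
        _ = (eLpNorm (fun e => f e (v e - w e)) 1 μ).toReal := h3
        _ ≤ (eLpNorm f P μ).toReal * ε' := h5
    obtain ⟨N, hN⟩ := Metric.tendsto_atTop.1 hGw (ε / 3) (by positivity)
    refine ⟨N, fun n hn => ?_⟩
    have e1 := est (un n) (hun n)
    have e2 := est u hu
    have b1 : (eLpNorm (un n) P μ).toReal * ε' ≤ K * ε' := by
      refine mul_le_mul_of_nonneg_right ?_ hε'.le
      have := ENNReal.toReal_mono hCt.ne (hC n)
      have h0 : 0 ≤ (eLpNorm u P μ).toReal := ENNReal.toReal_nonneg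
      linarith
    have b2 : (eLpNorm u P μ).toReal * ε' ≤ K * ε' := by
      refine mul_le_mul_of_nonneg_right ?_ hε'.le
      have h0 : 0 ≤ C.toReal := ENNReal.toReal_nonneg
      linarith
    have hKε : K * ε' = ε / 3 := by
      rw [hε'def]
      field_simp
    have hdist := hN n hn
    rw [Real.dist_eq] at hdist ⊢
    calc |(∫ e, un n e (v e) ∂μ) - ∫ e, u e (v e) ∂μ|
        ≤ |(∫ e, un n e (v e) ∂μ) - ∫ e, un n e (w e) ∂μ|
          + |(∫ e, un n e (w e) ∂μ) - ∫ e, u e (v e) ∂μ| := abs_sub_le _ _ _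
      _ ≤ |(∫ e, un n e (v e) ∂μ) - ∫ e, un n e (w e) ∂μ|
          + (|(∫ e, un n e (w e) ∂μ) - ∫ e, u e (w e) ∂μ|
            + |(∫ e, u e (w e) ∂μ) - ∫ e, u e (v e) ∂μ|) :=
          add_le_add le_rfl (abs_sub_le _ _ _)
      _ < ε := by
          have e2' : |(∫ e, u e (w e) ∂μ) - ∫ e, u e (v e) ∂μ| ≤ (eLpNorm u P μ).toReal * ε' := by
            rw [abs_sub_comm]; exact e2
          have := e1.trans b1
          have := e2'.trans b2
          linarith [hKε ▸ (e1.trans b1), hKε ▸ (e2'.trans b2), hdist]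
  -- Step B: indicators of dense values
  have hIndD : ∀ (A : Set E), MeasurableSet A → ∀ y ∈ D,
      Tendsto (fun n => ∫ e, un n e (A.indicator (fun _ => y) e) ∂μ) atTop
        (nhds (∫ e, u e (A.indicator (fun _ => y) e) ∂μ)) := by
    intro A hA y hy
    have hgm : MemLp (fun e => u e y) P μ :=
      hu.of_le_mul (hu.1.apply_continuousLinearMap y)
        (Eventually.of_forall fun e => by
          simpa [mul_comm] using (u e).le_opNorm y)
    have hgnC : ∀ n, eLpNorm (fun e => un n e y) P μ ≤ ENNReal.ofReal ‖y‖ * C := by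
      intro n
      refine le_trans (eLpNorm_le_mul_eLpNorm_of_ae_le_mul
        (Eventually.of_forall fun e => by
          simpa [mul_comm] using (un n e).le_opNorm y) P) ?_
      exact mul_le_mul_right (hC n) _
    have hCtop' : ENNReal.ofReal ‖y‖ * C ≠ ⊤ :=
      ENNReal.mul_ne_top ENNReal.ofReal_ne_top hCt.ne
    have htend := aux_setIntegral_tendsto hpq' (fun e => u e y) (fun n e => un n e y)
      hgm (fun n => (hun n).1.apply_continuousLinearMap y) hCtop' hgnC (hconv y hy) hA
    have key : ∀ w : E → X →L[ℝ] ℝ,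
        (∫ e, w e (A.indicator (fun _ => y) e) ∂μ) = ∫ e in A, w e y ∂μ := by
      intro w
      rw [← integral_indicator hA]
      congr 1
      ext e
      by_cases he : e ∈ A <;> simp [he]
    simp only [key]
    exact htend
  -- Step B': indicators of arbitrary values
  have hInd : ∀ (A : Set E), MeasurableSet A → ∀ c : X,
      Tendsto (fun n => ∫ e, un n e (A.indicator (fun _ => c) e) ∂μ) atTop
        (nhds (∫ e, u e (A.indicator (fun _ => c) e) ∂μ)) := by
    intro A hA c
    refine happrox _ (memLp_indicator_const Q hA c (Or.inr (measure_ne_top μ A))) ?_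
    intro ε hε
    set M : ℝ := (μ Set.univ).toReal ^ (1 / q) + 1 with hM
    have hM0 : 0 < M := by positivity
    obtain ⟨y, hyD, hyc⟩ := hD.exists_dist_lt c (div_pos hε hM0)
    refine ⟨A.indicator (fun _ => y),
      memLp_indicator_const Q hA y (Or.inr (measure_ne_top μ A)), ?_, hIndD A hA y hyD⟩
    have hsub : (A.indicator (fun _ => c) - A.indicator (fun _ => y) : E → X)
        = A.indicator (fun _ => c - y) := by
      ext e
      by_cases he : e ∈ A <;> simp [he]
    rw [hsub, eLpNorm_indicator_const hA hQ0 hQtop]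
    have hQq : Q.toReal = q := ENNReal.toReal_ofReal hq0.le
    rw [hQq]
    have hμA : μ A ^ (1 / q) ≤ ENNReal.ofReal M := by
      calc μ A ^ (1 / q) ≤ μ Set.univ ^ (1 / q) :=
            ENNReal.rpow_le_rpow (measure_mono (Set.subset_univ A)) (by positivity)
        _ = ENNReal.ofReal ((μ Set.univ).toReal) ^ (1 / q) := by
            rw [ENNReal.ofReal_toReal (measure_ne_top μ _)]
        _ = ENNReal.ofReal ((μ Set.univ).toReal ^ (1 / q)) :=
            ENNReal.ofReal_rpow_of_nonneg ENNReal.toReal_nonneg (by positivity)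
        _ ≤ ENNReal.ofReal M := ENNReal.ofReal_le_ofReal (by simp [hM])
    have hcy : (‖c - y‖₊ : ℝ≥0∞) ≤ ENNReal.ofReal (ε / M) := by
      rw [← enorm_eq_nnnorm, ← ofReal_norm_eq_enorm]
      refine ENNReal.ofReal_le_ofReal ?_
      rw [← dist_eq_norm]
      exact hyc.le
    calc (‖c - y‖₊ : ℝ≥0∞) * μ A ^ (1 / q)
        ≤ ENNReal.ofReal (ε / M) * ENNReal.ofReal M := mul_le_mul' hcy hμA
      _ = ENNReal.ofReal ε := by
          rw [← ENNReal.ofReal_mul (by positivity)]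
          congr 1
          field_simp
  -- Step C: simple functions
  have hSimple : ∀ s : SimpleFunc E X,
      Tendsto (fun n => ∫ e, un n e (s e) ∂μ) atTop (nhds (∫ e, u e (s e) ∂μ)) := by
    intro s
    induction s using MeasureTheory.SimpleFunc.induction with
    | const c hs =>
      rename_i A
      have hcoe : ⇑(SimpleFunc.piecewise A hs (SimpleFunc.const E c) (SimpleFunc.const E 0))
          = A.indicator fun _ => c := by
        ext e
        by_cases he : e ∈ A <;> simp [SimpleFunc.piecewise_apply, he]
      rw [hcoe]
      exact hInd A hs c
    | add hdisj hf hg =>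
      rename_i f g
      have hfQ : MemLp (⇑f) Q μ := (f.memLp_top μ).mono_exponent le_top
      have hgQ : MemLp (⇑g) Q μ := (g.memLp_top μ).mono_exponent le_top
      have hadd : ∀ w : E → X →L[ℝ] ℝ, MemLp w P μ →
          (∫ e, w e ((⇑f + ⇑g) e) ∂μ) = (∫ e, w e (f e) ∂μ) + ∫ e, w e (g e) ∂μ := by
        intro w hw
        rw [← integral_add (hInt w (⇑f) hw hfQ) (hInt w (⇑g) hw hgQ)]
        exact integral_congr_ae (Eventually.of_forall fun e => by
          simp [map_add])
      have hcoe : ⇑(f + g) = ⇑f + ⇑g := SimpleFunc.coe_add f g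
      rw [hcoe, hadd u hu]
      exact (hf.add hg).congr fun n => (hadd (un n) (hun n)).symm
  -- Final step: general `v`
  intro v hv
  refine happrox v hv ?_
  intro ε hε
  obtain ⟨s, hs, hsmem⟩ :=
    hv.exists_simpleFunc_eLpNorm_sub_lt hQtop (ENNReal.ofReal_pos.2 hε).ne'
  exact ⟨⇑s, hsmem, hs.le, hSimple s⟩
end
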